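/- Let d ≥ 1, let X be a random vector distributed according to the standard d-variate normal distribution N_d(0, I_d), and let s, t ∈ ℝ^d. Then the matrix expectation E[ X Xᵀ CS⁺(s,X) CS⁺(t,X) ] = ( I_d − (s−t)(s−t)ᵀ ) ψ(s−t). -/

import Mathlib

open MeasureTheory Real

/-- The standard `d`-variate normal distribution `N_d(0, I_d)`, given by its Lebesgue
density `(2π)^{-d/2} exp(-‖x‖²/2)`. -/
noncomputable def stdGaussian (d : ℕ) : Measure (EuclideanSpace ℝ (Fin d)) :=
  volume.withDensity fun x => ENNReal.ofReal ((2 * π) ^ (-(d : ℝ) / 2) * Real.exp (-‖x‖ ^ 2 / 2))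

/-- The characteristic function of the standard `d`-variate normal distribution. -/
noncomputable def stdNormalCF {d : ℕ} (t : EuclideanSpace ℝ (Fin d)) : ℝ :=
  Real.exp (-‖t‖ ^ 2 / 2)

/-- `CS⁺(t,x) = cos(tᵀx) + sin(tᵀx)`. -/
noncomputable def CSplus {d : ℕ} (t x : EuclideanSpace ℝ (Fin d)) : ℝ :=
  Real.cos (inner ℝ t x : ℝ) + Real.sin (inner ℝ t x : ℝ)

section Aux
open Complex Filter
open scoped ENNReal NNReal

noncomputable def gEF (u : ℝ) (x : ℝ) : ℂ := Complex.exp (-(1/2 : ℂ) * x ^ 2 + (u * Complex.I) * x)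

lemma gEF_re (u x : ℝ) : (-(1/2 : ℂ) * x ^ 2 + (u * Complex.I) * x).re = -(1/2) * x ^ 2 := by
  simp [pow_two, Complex.mul_re, Complex.mul_im]

lemma gEF_continuous (u : ℝ) : Continuous (gEF u) := by
  unfold gEF; fun_prop

lemma gEF_integrable_pow (u : ℝ) (n : ℕ) :
    Integrable fun x : ℝ => (x : ℂ) ^ n * gEF u x := by
  have hg : Integrable (fun x : ℝ => |x| ^ n * Real.exp (-(1/2) * x ^ 2)) := by
    have h0 := (integrable_rpow_mul_exp_neg_mul_sq (b := 1/2) (by norm_num)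
      (neg_one_lt_zero.trans_le (Nat.cast_nonneg n))).abs
    refine h0.congr ?_
    filter_upwards with x
    rw [Real.rpow_natCast, abs_mul, _root_.abs_pow, abs_of_pos (Real.exp_pos _)]
  refine hg.mono' ?_ ?_
  · exact (Continuous.mul (by fun_prop) (gEF_continuous u)).aestronglyMeasurable
  · filter_upwards with x
    rw [norm_mul, norm_pow, gEF, Complex.norm_exp, gEF_re]
    simp

lemma gEF_hasDerivAt_c (u : ℝ) (x : ℂ) :
    HasDerivAt (fun z : ℂ => Complex.exp (-(1/2 : ℂ) * z ^ 2 + (u * Complex.I) * z))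
      ((-x + u * Complex.I) * Complex.exp (-(1/2 : ℂ) * x ^ 2 + (u * Complex.I) * x)) x := by
  have hid : HasDerivAt (fun z : ℂ => z) 1 x := hasDerivAt_id x
  have hpoly : HasDerivAt (fun z : ℂ => -(1/2 : ℂ) * z ^ 2 + ((u : ℂ) * Complex.I) * z)
      (-(1/2 : ℂ) * (2 * x ^ 1 * 1) + ((u : ℂ) * Complex.I) * 1) x :=
    ((hid.pow 2).const_mul _).add (hid.const_mul _)
  have := hpoly.cexp
  exact this.congr_deriv (by ring)

lemma gEF_hasDerivAt (u x : ℝ) :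
    HasDerivAt (fun x : ℝ => gEF u x) ((-(x : ℂ) + u * Complex.I) * gEF u x) x :=
  (gEF_hasDerivAt_c u (x : ℂ)).comp_ofReal

lemma gEF_mul_hasDerivAt (u x : ℝ) :
    HasDerivAt (fun x : ℝ => (x : ℂ) * gEF u x)
      ((1 + ((u : ℂ) * Complex.I) * x - (x : ℂ) ^ 2) * gEF u x) x := by
  have hid : HasDerivAt (fun z : ℂ => z) 1 (x : ℂ) := hasDerivAt_id _
  have h := (hid.mul (gEF_hasDerivAt_c u (x : ℂ))).comp_ofReal
  refine h.congr_deriv ?_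
  unfold gEF
  ring

lemma gEF_integral (u : ℝ) :
    ∫ x : ℝ, gEF u x = Real.sqrt (2 * π) * Complex.exp (-(u : ℂ) ^ 2 / 2) := by
  have h := integral_cexp_quadratic (b := -(1/2 : ℂ)) (by norm_num) ((u : ℂ) * Complex.I) 0
  unfold gEF
  rw [show (fun x : ℝ => Complex.exp (-(1/2 : ℂ) * x ^ 2 + (u * Complex.I) * x))
      = fun x : ℝ => Complex.exp (-(1/2 : ℂ) * x ^ 2 + ((u : ℂ) * Complex.I) * x + 0)
      from funext fun x => by rw [add_zero], h]
  congr 1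
  · rw [show (↑π / -(-(1/2 : ℂ))) = ((2 * π : ℝ) : ℂ) by push_cast; ring,
      Real.sqrt_eq_rpow, Complex.ofReal_cpow (by positivity)]
    norm_num
  · congr 1
    rw [mul_pow, Complex.I_sq]
    ring

lemma gEF_integral_mul (u : ℝ) :
    ∫ x : ℝ, (x : ℂ) * gEF u x
      = ((u : ℂ) * Complex.I) * (Real.sqrt (2 * π) * Complex.exp (-(u : ℂ) ^ 2 / 2)) := by
  have hint1 : Integrable fun x : ℝ => (x : ℂ) * gEF u x :=
    (gEF_integrable_pow u 1).congr (by filter_upwards with x; rw [pow_one])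
  have hint0 : Integrable fun x : ℝ => gEF u x :=
    (gEF_integrable_pow u 0).congr (by filter_upwards with x; rw [pow_zero, one_mul])
  have hint : Integrable fun x : ℝ => (-(x : ℂ) + u * Complex.I) * gEF u x := by
    have e : (fun x : ℝ => (-(x : ℂ) + u * Complex.I) * gEF u x)
        = fun x : ℝ => -((x : ℂ) * gEF u x) + ((u : ℂ) * Complex.I) * gEF u x := by
      funext x; ring
    rw [e]
    exact hint1.neg.add (hint0.const_mul _)
  have hzero : ∫ x : ℝ, (-(x : ℂ) + u * Complex.I) * gEF u x = 0 :=
    integral_eq_zero_of_hasDerivAt_of_integrable (fun x => gEF_hasDerivAt u x) hint hint0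
  have hsplit : ∫ x : ℝ, (-(x : ℂ) + u * Complex.I) * gEF u x
      = -(∫ x : ℝ, (x : ℂ) * gEF u x) + ((u : ℂ) * Complex.I) * ∫ x : ℝ, gEF u x := by
    have e : (fun x : ℝ => (-(x : ℂ) + u * Complex.I) * gEF u x)
        = fun x : ℝ => -((x : ℂ) * gEF u x) + ((u : ℂ) * Complex.I) * gEF u x := by
      funext x; ring
    have hneg : Integrable (fun x : ℝ => -((x : ℂ) * gEF u x)) := hint1.neg
    have hcm : Integrable (fun x : ℝ => ((u : ℂ) * Complex.I) * gEF u x) := hint0.const_mul _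
    rw [e, integral_add hneg hcm, integral_neg, integral_const_mul]
  rw [hsplit, gEF_integral] at hzero
  linear_combination -hzero

lemma gEF_integral_sq (u : ℝ) :
    ∫ x : ℝ, (x : ℂ) ^ 2 * gEF u x
      = (1 - (u : ℂ) ^ 2) * (Real.sqrt (2 * π) * Complex.exp (-(u : ℂ) ^ 2 / 2)) := by
  have hint2 : Integrable fun x : ℝ => (x : ℂ) ^ 2 * gEF u x := gEF_integrable_pow u 2
  have hint1 : Integrable fun x : ℝ => (x : ℂ) * gEF u x :=
    (gEF_integrable_pow u 1).congr (by filter_upwards with x; rw [pow_one])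
  have hint0 : Integrable fun x : ℝ => gEF u x :=
    (gEF_integrable_pow u 0).congr (by filter_upwards with x; rw [pow_zero, one_mul])
  have hderiv := gEF_mul_hasDerivAt u
  have hint : Integrable fun x : ℝ =>
      ((1 + ((u : ℂ) * Complex.I) * x - (x : ℂ) ^ 2) * gEF u x) := by
    have e : (fun x : ℝ => (1 + ((u : ℂ) * Complex.I) * x - (x : ℂ) ^ 2) * gEF u x)
        = fun x : ℝ => (gEF u x + ((u : ℂ) * Complex.I) * ((x : ℂ) * gEF u x))
          - (x : ℂ) ^ 2 * gEF u x := by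
      funext x; ring
    rw [e]
    exact (hint0.add (hint1.const_mul _)).sub hint2
  have hzero := integral_eq_zero_of_hasDerivAt_of_integrable hderiv hint hint1
  have hsplit : ∫ x : ℝ, ((1 + ((u : ℂ) * Complex.I) * x - (x : ℂ) ^ 2) * gEF u x)
      = ((∫ x : ℝ, gEF u x) + ((u : ℂ) * Complex.I) * ∫ x : ℝ, (x : ℂ) * gEF u x)
        - ∫ x : ℝ, (x : ℂ) ^ 2 * gEF u x := by
    have e : (fun x : ℝ => (1 + ((u : ℂ) * Complex.I) * x - (x : ℂ) ^ 2) * gEF u x)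
        = fun x : ℝ => (gEF u x + ((u : ℂ) * Complex.I) * ((x : ℂ) * gEF u x))
          - (x : ℂ) ^ 2 * gEF u x := by
      funext x; ring
    have hcm : Integrable (fun x : ℝ => ((u : ℂ) * Complex.I) * ((x : ℂ) * gEF u x)) :=
      hint1.const_mul _
    have hsum : Integrable (fun x : ℝ =>
        gEF u x + ((u : ℂ) * Complex.I) * ((x : ℂ) * gEF u x)) := hint0.add hcm
    rw [e, integral_sub hsum hint2, integral_add hint0 hcm, integral_const_mul]
  rw [hsplit, gEF_integral, gEF_integral_mul] at hzero
  have := Complex.I_sq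
  linear_combination -hzero + (u : ℂ) ^ 2 * (Real.sqrt (2 * π) * Complex.exp (-(u : ℂ) ^ 2 / 2)) * this

def mexp {d : ℕ} (k l i : Fin d) : ℕ := (if i = k then 1 else 0) + (if i = l then 1 else 0)

lemma prod_pow_mexp {d : ℕ} (k l : Fin d) (y : Fin d → ℝ) :
    ∏ i, (y i : ℂ) ^ (mexp k l i) = (y k : ℂ) * (y l : ℂ) := by
  unfold mexp
  simp only [pow_add, Finset.prod_mul_distrib, pow_ite, pow_one, pow_zero,
    Finset.prod_ite_eq', Finset.mem_univ, if_true]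

lemma gEF_prod_integrable (d : ℕ) (u : Fin d → ℝ) (k l : Fin d) :
    Integrable (fun y : Fin d → ℝ => ∏ i, ((y i : ℂ) ^ (mexp k l i) * gEF (u i) (y i))) :=
  Integrable.fintype_prod (f := fun i (x : ℝ) => (x : ℂ) ^ (mexp k l i) * gEF (u i) x)
    fun i => gEF_integrable_pow (u i) (mexp k l i)

lemma gEF_pi_integral (d : ℕ) (u : Fin d → ℝ) (k l : Fin d) :
    ∫ y : Fin d → ℝ, ∏ i, ((y i : ℂ) ^ (mexp k l i) * gEF (u i) (y i))
      = ((((if k = l then (1 : ℝ) else 0) - u k * u l) * (Real.sqrt (2 * π)) ^ d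
          * Real.exp (-(∑ i, (u i) ^ 2) / 2) : ℝ) : ℂ) := by
  rw [MeasureTheory.integral_fintype_prod_volume_eq_prod
    (f := fun i (x : ℝ) => (x : ℂ) ^ (mexp k l i) * gEF (u i) x)]
  have hB : ∀ i : Fin d, (∫ x : ℝ, gEF (u i) x)
      = Real.sqrt (2 * π) * Complex.exp (-((u i : ℂ)) ^ 2 / 2) := fun i => gEF_integral (u i)
  have hProdB : ∏ i, (Real.sqrt (2 * π) * Complex.exp (-((u i : ℂ)) ^ 2 / 2))
      = (((Real.sqrt (2 * π)) ^ d * Real.exp (-(∑ i, (u i) ^ 2) / 2) : ℝ) : ℂ) := by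
    rw [Finset.prod_mul_distrib, Finset.prod_const, ← Complex.exp_sum]
    push_cast
    congr 2
    · simp
    · rw [← Finset.sum_div, ← Finset.sum_neg_distrib]
  by_cases hkl : k = l
  · subst hkl
    have hm : ∀ i : Fin d, mexp k k i = if i = k then 2 else 0 := by
      intro i; unfold mexp; split <;> simp
    simp_rw [hm]
    have hval : ∀ i : Fin d, (∫ x : ℝ, (x : ℂ) ^ (if i = k then 2 else 0) * gEF (u i) x)
        = (if i = k then (1 - (u i : ℂ) ^ 2) else 1)
          * (Real.sqrt (2 * π) * Complex.exp (-((u i : ℂ)) ^ 2 / 2)) := by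
      intro i
      by_cases h : i = k
      · subst h
        rw [if_pos rfl, if_pos rfl, ← gEF_integral_sq (u i)]
      · rw [if_neg h, if_neg h, one_mul,
          show (fun x : ℝ => (x : ℂ) ^ (0 : ℕ) * gEF (u i) x) = fun x : ℝ => gEF (u i) x
            from funext fun x => by rw [pow_zero, one_mul]]
        exact gEF_integral (u i)
    simp_rw [hval]
    rw [Finset.prod_mul_distrib, hProdB, Finset.prod_ite_eq' Finset.univ k
      (fun i => (1 - (u i : ℂ) ^ 2))]
    simp only [Finset.mem_univ, if_true]
    push_cast
    ring
  · have hm : ∀ i : Fin d, mexp k l i = (if i = k then 1 else 0) + (if i = l then 1 else 0) :=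
      fun i => rfl
    have hval : ∀ i : Fin d, (∫ x : ℝ, (x : ℂ) ^ (mexp k l i) * gEF (u i) x)
        = ((if i = k then (u i : ℂ) * Complex.I else 1) * (if i = l then (u i : ℂ) * Complex.I else 1))
          * (Real.sqrt (2 * π) * Complex.exp (-((u i : ℂ)) ^ 2 / 2)) := by
      intro i
      by_cases h1 : i = k <;> by_cases h2 : i = l
      · exact absurd (h1 ▸ h2.symm ▸ rfl : k = l) hkl
      · have e1 : mexp k l i = 1 := by unfold mexp; rw [if_pos h1, if_neg h2]
        rw [e1, if_pos h1, if_neg h2, mul_one,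
          show (fun x : ℝ => (x : ℂ) ^ (1 : ℕ) * gEF (u i) x)
            = fun x : ℝ => (x : ℂ) * gEF (u i) x from funext fun x => by rw [pow_one]]
        exact gEF_integral_mul (u i)
      · have e1 : mexp k l i = 1 := by unfold mexp; rw [if_neg h1, if_pos h2]
        rw [e1, if_neg h1, if_pos h2, one_mul,
          show (fun x : ℝ => (x : ℂ) ^ (1 : ℕ) * gEF (u i) x)
            = fun x : ℝ => (x : ℂ) * gEF (u i) x from funext fun x => by rw [pow_one]]
        exact gEF_integral_mul (u i)
      · have e1 : mexp k l i = 0 := by unfold mexp; rw [if_neg h1, if_neg h2]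
        rw [e1, if_neg h1, if_neg h2, one_mul, one_mul,
          show (fun x : ℝ => (x : ℂ) ^ (0 : ℕ) * gEF (u i) x) = fun x : ℝ => gEF (u i) x
            from funext fun x => by rw [pow_zero, one_mul]]
        exact gEF_integral (u i)
    simp_rw [hval]
    rw [Finset.prod_mul_distrib, hProdB, Finset.prod_mul_distrib,
      Finset.prod_ite_eq' Finset.univ k (fun i => (u i : ℂ) * Complex.I),
      Finset.prod_ite_eq' Finset.univ l (fun i => (u i : ℂ) * Complex.I)]
    simp only [Finset.mem_univ, if_true, hkl, if_false]
    have := Complex.I_sq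
    push_cast
    linear_combination ((Real.sqrt (2 * π) : ℂ)) ^ d
      * Complex.exp ((-(∑ i, ((u i : ℂ)) ^ 2)) / 2) * (u k : ℂ) * (u l : ℂ) * this

lemma gEF_prod_eq (d : ℕ) (u : Fin d → ℝ) (y : Fin d → ℝ) :
    ∏ i, gEF (u i) (y i)
      = ((Real.exp (-(∑ i, (y i) ^ 2) / 2) : ℝ) : ℂ)
        * (((Real.cos (∑ i, u i * y i) : ℝ) : ℂ)
           + ((Real.sin (∑ i, u i * y i) : ℝ) : ℂ) * Complex.I) := by
  unfold gEF
  rw [← Complex.exp_sum]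
  have h : ∑ i, (-(1/2 : ℂ) * ((y i : ℂ)) ^ 2 + ((u i : ℂ) * Complex.I) * (y i : ℂ))
      = ((-(∑ i, (y i) ^ 2) / 2 : ℝ) : ℂ) + ((∑ i, u i * y i : ℝ) : ℂ) * Complex.I := by
    rw [Finset.sum_add_distrib]
    push_cast
    rw [Finset.sum_mul]
    congr 1
    · rw [neg_div, Finset.sum_div, ← Finset.sum_neg_distrib]
      exact Finset.sum_congr rfl fun i _ => by ring

    · exact Finset.sum_congr rfl fun i _ => by ring
  rw [h, Complex.exp_add, Complex.exp_mul_I, ← Complex.ofReal_cos, ← Complex.ofReal_sin,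
    ← Complex.ofReal_exp]

lemma pi_complex_integrable (d : ℕ) (u : Fin d → ℝ) (k l : Fin d) :
    Integrable (fun y : Fin d → ℝ => ((y k : ℂ) * (y l : ℂ)) * ∏ i, gEF (u i) (y i)) := by
  have e : (fun y : Fin d → ℝ => ((y k : ℂ) * (y l : ℂ)) * ∏ i, gEF (u i) (y i))
      = fun y : Fin d → ℝ => ∏ i, ((y i : ℂ) ^ (mexp k l i) * gEF (u i) (y i)) := by
    funext y
    rw [Finset.prod_mul_distrib, prod_pow_mexp]
  rw [e]
  exact gEF_prod_integrable d u k l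

lemma pi_complex_integral (d : ℕ) (u : Fin d → ℝ) (k l : Fin d) :
    ∫ y : Fin d → ℝ, ((y k : ℂ) * (y l : ℂ)) * ∏ i, gEF (u i) (y i)
      = ((((if k = l then (1 : ℝ) else 0) - u k * u l) * (Real.sqrt (2 * π)) ^ d
          * Real.exp (-(∑ i, (u i) ^ 2) / 2) : ℝ) : ℂ) := by
  have e : (fun y : Fin d → ℝ => ((y k : ℂ) * (y l : ℂ)) * ∏ i, gEF (u i) (y i))
      = fun y : Fin d → ℝ => ∏ i, ((y i : ℂ) ^ (mexp k l i) * gEF (u i) (y i)) := by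
    funext y
    rw [Finset.prod_mul_distrib, prod_pow_mexp]
  rw [e]
  exact gEF_pi_integral d u k l

lemma pi_cos_integrable (d : ℕ) (u : Fin d → ℝ) (k l : Fin d) :
    Integrable (fun y : Fin d → ℝ =>
      y k * y l * Real.exp (-(∑ i, (y i) ^ 2) / 2) * Real.cos (∑ i, u i * y i)) := by
  have h := (pi_complex_integrable d u k l).re
  refine h.congr ?_
  filter_upwards with y
  rw [gEF_prod_eq]
  simp only [RCLike.re_to_complex, RCLike.im_to_complex, Complex.mul_re, Complex.mul_im,
    Complex.add_re, Complex.add_im, Complex.ofReal_re, Complex.ofReal_im, Complex.I_re,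
    Complex.I_im]
  ring

lemma pi_sin_integrable (d : ℕ) (u : Fin d → ℝ) (k l : Fin d) :
    Integrable (fun y : Fin d → ℝ =>
      y k * y l * Real.exp (-(∑ i, (y i) ^ 2) / 2) * Real.sin (∑ i, u i * y i)) := by
  have h := (pi_complex_integrable d u k l).im
  refine h.congr ?_
  filter_upwards with y
  rw [gEF_prod_eq]
  simp only [RCLike.re_to_complex, RCLike.im_to_complex, Complex.mul_re, Complex.mul_im,
    Complex.add_re, Complex.add_im, Complex.ofReal_re, Complex.ofReal_im, Complex.I_re,
    Complex.I_im]
  ring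

lemma pi_cos_integral (d : ℕ) (u : Fin d → ℝ) (k l : Fin d) :
    ∫ y : Fin d → ℝ,
      y k * y l * Real.exp (-(∑ i, (y i) ^ 2) / 2) * Real.cos (∑ i, u i * y i)
      = ((if k = l then (1 : ℝ) else 0) - u k * u l) * (Real.sqrt (2 * π)) ^ d
          * Real.exp (-(∑ i, (u i) ^ 2) / 2) := by
  have h := integral_re (pi_complex_integrable d u k l)
  rw [pi_complex_integral] at h
  simp only [RCLike.re_to_complex, Complex.ofReal_re] at h
  rw [← h]
  congr 1; funext y
  rw [gEF_prod_eq]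
  simp only [RCLike.re_to_complex, RCLike.im_to_complex, Complex.mul_re, Complex.mul_im,
    Complex.add_re, Complex.add_im, Complex.ofReal_re, Complex.ofReal_im, Complex.I_re,
    Complex.I_im]
  ring

lemma pi_sin_integral (d : ℕ) (u : Fin d → ℝ) (k l : Fin d) :
    ∫ y : Fin d → ℝ,
      y k * y l * Real.exp (-(∑ i, (y i) ^ 2) / 2) * Real.sin (∑ i, u i * y i) = 0 := by
  have h := integral_im (pi_complex_integrable d u k l)
  rw [pi_complex_integral] at h
  simp only [RCLike.im_to_complex, Complex.ofReal_im] at h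
  rw [← h]
  congr 1; funext y
  rw [gEF_prod_eq]
  simp only [RCLike.re_to_complex, RCLike.im_to_complex, Complex.mul_re, Complex.mul_im,
    Complex.add_re, Complex.add_im, Complex.ofReal_re, Complex.ofReal_im, Complex.I_re,
    Complex.I_im]
  ring

theorem aux_main (d : ℕ) (hd : 1 ≤ d)
    (s t : EuclideanSpace ℝ (Fin d)) (k l : Fin d) :
    ∫ x, x k * x l * (CSplus s x * CSplus t x) ∂(stdGaussian d)
      = ((if k = l then (1 : ℝ) else 0) - (s - t) k * (s - t) l) * stdNormalCF (s - t) := by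
  classical
  have hmeq : stdGaussian d = (volume : Measure (EuclideanSpace ℝ (Fin d))).withDensity
      (fun x => (((2 * π) ^ (-(d : ℝ) / 2) * Real.exp (-‖x‖ ^ 2 / 2)).toNNReal : ℝ≥0∞)) := rfl
  have hmeas : Measurable fun x : EuclideanSpace ℝ (Fin d) =>
      ((2 * π) ^ (-(d : ℝ) / 2) * Real.exp (-‖x‖ ^ 2 / 2)).toNNReal := by
    have : Continuous fun x : EuclideanSpace ℝ (Fin d) =>
        (2 * π) ^ (-(d : ℝ) / 2) * Real.exp (-‖x‖ ^ 2 / 2) := by fun_prop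
    exact this.measurable.real_toNNReal
  rw [hmeq, integral_withDensity_eq_integral_smul (μ := volume) hmeas]
  have hmp := (EuclideanSpace.volume_preserving_symm_measurableEquiv_toLp (Fin d)).symm
  rw [← hmp.integral_comp (MeasurableEquiv.measurableEmbedding _)]
  have hpt : (fun y : Fin d → ℝ =>
      (((2 * π) ^ (-(d : ℝ) / 2) * Real.exp
          (-‖(MeasurableEquiv.toLp 2 (Fin d → ℝ)).symm.symm y‖ ^ 2 / 2)).toNNReal : ℝ≥0)
        • (((MeasurableEquiv.toLp 2 (Fin d → ℝ)).symm.symm y) k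
            * ((MeasurableEquiv.toLp 2 (Fin d → ℝ)).symm.symm y) l
            * (CSplus s ((MeasurableEquiv.toLp 2 (Fin d → ℝ)).symm.symm y)
               * CSplus t ((MeasurableEquiv.toLp 2 (Fin d → ℝ)).symm.symm y))))
      = fun y : Fin d → ℝ => (2 * π) ^ (-(d : ℝ) / 2) *
          ((y k * y l * Real.exp (-(∑ i, (y i) ^ 2) / 2) * Real.cos (∑ i, (s i - t i) * y i))
           + (y k * y l * Real.exp (-(∑ i, (y i) ^ 2) / 2)
              * Real.sin (∑ i, (s i + t i) * y i))) := by
    funext y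
    rw [NNReal.smul_def, Real.coe_toNNReal _ (by positivity)]
    have hnorm : ‖(MeasurableEquiv.toLp 2 (Fin d → ℝ)).symm.symm y‖ ^ 2 = ∑ i, (y i) ^ 2 := by
      rw [EuclideanSpace.norm_eq, Real.sq_sqrt (by positivity)]
      exact Finset.sum_congr rfl fun i _ => by
        rw [Real.norm_eq_abs]; exact _root_.sq_abs (y i)
    rw [hnorm]
    have hinner_s :
        (inner ℝ s ((MeasurableEquiv.toLp 2 (Fin d → ℝ)).symm.symm y) : ℝ) = ∑ i, s i * y i := by
      simp only [PiLp.inner_apply, RCLike.inner_apply, conj_trivial]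
      exact Finset.sum_congr rfl fun i _ => mul_comm _ _
    have hinner_t :
        (inner ℝ t ((MeasurableEquiv.toLp 2 (Fin d → ℝ)).symm.symm y) : ℝ) = ∑ i, t i * y i := by
      simp only [PiLp.inner_apply, RCLike.inner_apply, conj_trivial]
      exact Finset.sum_congr rfl fun i _ => mul_comm _ _
    have hsub : (∑ i, s i * y i) - (∑ i, t i * y i) = ∑ i, (s i - t i) * y i := by
      rw [← Finset.sum_sub_distrib]; exact Finset.sum_congr rfl fun i _ => by ring
    have hadd : (∑ i, s i * y i) + (∑ i, t i * y i) = ∑ i, (s i + t i) * y i := by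
      rw [← Finset.sum_add_distrib]; exact Finset.sum_congr rfl fun i _ => by ring
    unfold CSplus
    rw [hinner_s, hinner_t, ← hsub, ← hadd, Real.cos_sub, Real.sin_add]
    have hck : ((MeasurableEquiv.toLp 2 (Fin d → ℝ)).symm.symm y) k = y k := rfl
    have hcl : ((MeasurableEquiv.toLp 2 (Fin d → ℝ)).symm.symm y) l = y l := rfl
    rw [hck, hcl, smul_eq_mul]
    ring
  rw [hpt, integral_const_mul,
    integral_add (pi_cos_integrable d (fun i => s i - t i) k l)
      (pi_sin_integrable d (fun i => s i + t i) k l),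
    pi_cos_integral d (fun i => s i - t i) k l,
    pi_sin_integral d (fun i => s i + t i) k l, add_zero]
  have hconst : (2 * π) ^ (-(d : ℝ) / 2) * (Real.sqrt (2 * π)) ^ d = 1 := by
    rw [← Real.rpow_natCast (Real.sqrt (2 * π)) d, Real.sqrt_eq_rpow,
      ← Real.rpow_mul (by positivity), ← Real.rpow_add (by positivity)]
    rw [show -(d : ℝ) / 2 + 1 / 2 * (d : ℝ) = 0 by ring, Real.rpow_zero]
  have hstk : (s - t) k = s k - t k := rfl
  have hstl : (s - t) l = s l - t l := rfl
  have hCF : stdNormalCF (s - t) = Real.exp (-(∑ i, (s i - t i) ^ 2) / 2) := by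
    unfold stdNormalCF
    rw [EuclideanSpace.norm_eq, Real.sq_sqrt (by positivity),
      show ∑ i, ‖(s - t) i‖ ^ 2 = ∑ i, (s i - t i) ^ 2 from
        Finset.sum_congr rfl fun i _ => by
          rw [Real.norm_eq_abs]; exact _root_.sq_abs (s i - t i)]
  rw [hCF, hstk, hstl]
  linear_combination (((if k = l then (1 : ℝ) else 0) - (s k - t k) * (s l - t l))
    * Real.exp (-(∑ i, (s i - t i) ^ 2) / 2)) * hconst

end Aux

/-- For `X ~ N_d(0, I_d)`, entrywise:
`E[X Xᵀ CS⁺(s,X) CS⁺(t,X)] = (I_d - (s-t)(s-t)ᵀ) ψ(s-t)`. -/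
theorem stdGaussian_matrix_CSplus_CSplus_expectation (d : ℕ) (hd : 1 ≤ d)
    (s t : EuclideanSpace ℝ (Fin d)) (k l : Fin d) :
    ∫ x, x k * x l * (CSplus s x * CSplus t x) ∂(stdGaussian d)
      = ((if k = l then (1 : ℝ) else 0) - (s - t) k * (s - t) l) * stdNormalCF (s - t) :=
  aux_main d hd s t k l
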